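/- Let β = (βx, βy) ∈ (0,∞)² and suppose f : X → ℝ is convex, differentiable, and its gradient ∇f is L-Lipschitz. Then for every z = (x,y) ∈ X × Y, the Karush–Kuhn–Tucker error is bounded by the self-centered smoothed gap: ‖∇f(x) + Aᵀy‖² + ‖Ax − b‖² ≤ max( 2(L + βx)²/βx, 2βy ) · G_β(z). -/

import Mathlib

open scoped RealInnerProductSpace
open Filter Topology Metric

noncomputable section

variable {X Y : Type*} [NormedAddCommGroup X] [InnerProductSpace ℝ X]
  [NormedAddCommGroup Y] [InnerProductSpace ℝ Y]

/-- The Lagrangian `L(x, y) = f(x) + ⟪A x − b, y⟫`. -/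
def Lag (f : X → EReal) (A : X →L[ℝ] Y) (b : Y) (x : X) (y : Y) : EReal :=
  f x + ((⟪A x - b, y⟫ : ℝ) : EReal)

/-- The smoothed duality gap `G_β((x, y); (xd, yd))`, valued in `ℝ ∪ {+∞}` (here `EReal`;
the inner expression is `−∞` exactly when `f x' = +∞`, so such `x'` do not contribute). -/
def smoothedGap (f : X → EReal) (A : X →L[ℝ] Y) (b : Y) (βx βy : ℝ)
    (x : X) (y : Y) (xd : X) (yd : Y) : EReal :=
  ⨆ w : X × Y,
    (Lag f A b x w.2 - Lag f A b w.1 y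
      - ((βx / 2 * ‖w.1 - xd‖ ^ 2 + βy / 2 * ‖w.2 - yd‖ ^ 2 : ℝ) : EReal))

/-- `f` is proper: never `−∞` and not identically `+∞`. -/
def EProper (f : X → EReal) : Prop := (∀ u, f u ≠ ⊥) ∧ ∃ u, f u ≠ ⊤

/-- Convexity for an `EReal`-valued function. -/
def EConvexOn (f : X → EReal) : Prop :=
  ∀ u v : X, ∀ t : ℝ, 0 ≤ t → t ≤ 1 →
    f (t • u + (1 - t) • v) ≤ (t : EReal) * f u + ((1 - t : ℝ) : EReal) * f v

/-- The subdifferential `∂f(x) = {q | ∀ u, f(u) ≥ f(x) + ⟪q, u − x⟫}`. -/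
def ESubdiff (f : X → EReal) (x : X) : Set X :=
  {q | ∀ u : X, f x + ((⟪q, u - x⟫ : ℝ) : EReal) ≤ f u}

/-- `p = Prox_{s f}(v)`: `p` is the (unique) minimizer of `f(·) + (1/(2s))‖· − v‖²`. -/
def IsProx (f : X → EReal) (s : ℝ) (v p : X) : Prop :=
  ∀ u : X, f p + ((1 / (2 * s) * ‖p - v‖ ^ 2 : ℝ) : EReal)
    ≤ f u + ((1 / (2 * s) * ‖u - v‖ ^ 2 : ℝ) : EReal)

/-- The Fenchel–Legendre conjugate `f*(φ) = sup_u (⟪φ, u⟫ − f(u))`. -/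
def fenchel (f : X → EReal) (φ : X) : EReal := ⨆ u : X, (((⟪φ, u⟫ : ℝ) : EReal) - f u)

/-- The domain of the Fenchel conjugate. -/
def fdom (f : X → EReal) : Set X := {φ | fenchel f φ ≠ ⊤}

/-- `a = Proj_S(v)`: `a` is the (unique, for `S` closed convex nonempty) Euclidean
projection of `v` onto `S`. -/
def IsProj (S : Set X) (v a : X) : Prop := a ∈ S ∧ ∀ u ∈ S, ‖a - v‖ ≤ ‖u - v‖

/-- `(xs, ys)` is a saddle point of the Lagrangian. -/
def IsSaddle (f : X → EReal) (A : X →L[ℝ] Y) (b : Y) (xs : X) (ys : Y) : Prop :=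
  ∀ (x' : X) (y' : Y), Lag f A b xs y' ≤ Lag f A b xs ys ∧ Lag f A b xs ys ≤ Lag f A b x' ys

/-- The set of saddle points `Z⋆`. -/
def saddleSet (f : X → EReal) (A : X →L[ℝ] Y) (b : Y) : Set (X × Y) :=
  {zs | IsSaddle f A b zs.1 zs.2}

/-- Euclidean distance from a point of `X × Y` to a set. -/
def distZ (z : X × Y) (S : Set (X × Y)) : ℝ :=
  ⨅ w : S, Real.sqrt (‖z.1 - (w : X × Y).1‖ ^ 2 + ‖z.2 - (w : X × Y).2‖ ^ 2)

/-- The projected duality gap `D(z)`, where `fx = f(x)` and `fa = f*(a)` (both finite). -/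
def PDG (fx fa : ℝ) (A : X →L[ℝ] Y) (At : Y →L[ℝ] X) (b : Y) (a x : X) (y : Y) : ℝ :=
  |fx + fa + ⟪b, y⟫| ^ 2 + ‖a + At y‖ ^ 2 + ‖A x - b‖ ^ 2

/-- KKT error bounded by the smoothed gap for smooth `f`.
If `f : X → ℝ` is convex and differentiable with gradient `f'` that is `L`-Lipschitz, then
`‖∇f(x) + Aᵀy‖² + ‖Ax − b‖² ≤ max(2(L + βx)²/βx, 2βy) G_β(z)`. -/
lemma convexOn_grad_le {X : Type*} [NormedAddCommGroup X] [InnerProductSpace ℝ X]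
    [CompleteSpace X] (f : X → ℝ) (hc : ConvexOn ℝ Set.univ f)
    {v g : X} (hg : HasGradientAt f g v) (u : X) :
    f v + ⟪g, u - v⟫ ≤ f u := by
  have hline : HasDerivAt (fun s : ℝ => v + s • (u - v)) (u - v) 0 := by
    simpa using ((hasDerivAt_id (0 : ℝ)).smul_const (u - v)).const_add v
  have h0 : HasFDerivAt f (InnerProductSpace.toDual ℝ X g) (v + (0 : ℝ) • (u - v)) := by
    simpa using hg.hasFDerivAt
  have hφ : HasDerivAt (fun s : ℝ => f (v + s • (u - v))) ⟪g, u - v⟫ 0 := by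
    have := h0.comp_hasDerivAt 0 hline
    simp only [InnerProductSpace.toDual_apply_apply] at this; exact this
  have hslope : Tendsto (slope (fun s : ℝ => f (v + s • (u - v))) 0) (𝓝[>] 0)
      (𝓝 ⟪g, u - v⟫) :=
    (hasDerivAt_iff_tendsto_slope.mp hφ).mono_left
      (nhdsWithin_mono _ (fun s hs => ne_of_gt hs))
  have hbound : ∀ᶠ s in 𝓝[>] (0 : ℝ),
      slope (fun s : ℝ => f (v + s • (u - v))) 0 s ≤ f u - f v := by
    filter_upwards [Ioc_mem_nhdsGT (zero_lt_one)] with s hs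
    have hs0 : (0 : ℝ) < s := hs.1
    have hconv := hc.2 (Set.mem_univ u) (Set.mem_univ v) hs0.le (by linarith [hs.2] : (0:ℝ) ≤ 1 - s)
      (by ring)
    have heq : v + s • (u - v) = s • u + (1 - s) • v := by
      rw [smul_sub, sub_smul, one_smul]; abel
    rw [slope_def_field, heq]
    rw [div_le_iff₀ (by simpa using hs0)]
    simp only [zero_smul, add_zero, smul_eq_mul] at hconv ⊢
    nlinarith [hconv]
  have := le_of_tendsto hslope hbound
  linarith
set_option maxHeartbeats 1000000 in
theorem KKT_le_smoothedGap
    [FiniteDimensional ℝ X] [FiniteDimensional ℝ Y]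
    (f : X → ℝ) (A : X →L[ℝ] Y) (At : Y →L[ℝ] X) (b : Y)
    (hf_conv : ConvexOn ℝ Set.univ f)
    (f' : X → X) (hf' : ∀ u : X, HasGradientAt f (f' u) u)
    (L : NNReal) (hLip : LipschitzWith L f')
    (hAt : ∀ (u : X) (v : Y), ⟪A u, v⟫ = ⟪u, At v⟫)
    (βx βy : ℝ) (hβx : 0 < βx) (hβy : 0 < βy)
    (x : X) (y : Y) :
    ((‖f' x + At y‖ ^ 2 + ‖A x - b‖ ^ 2 : ℝ) : EReal)
      ≤ ((max (2 * ((L : ℝ) + βx) ^ 2 / βx) (2 * βy) : ℝ) : EReal)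
          * smoothedGap (fun u => ((f u : ℝ) : EReal)) A b βx βy x y x y := by
  have hcX : CompleteSpace X := FiniteDimensional.complete ℝ X
  have hL : (0 : ℝ) ≤ L := L.coe_nonneg
  have hden : (0 : ℝ) < 2 * (L : ℝ) + βx := by linarith
  set g : X := f' x + At y with hgdef
  set v : Y := A x - b with hvdef
  set t : ℝ := 1 / (2 * (L : ℝ) + βx) with htdef
  have htpos : 0 < t := by positivity
  have hteq : (2 * (L : ℝ) + βx) * t = 1 := by rw [htdef, mul_one_div_cancel hden.ne']
  set x' : X := x - t • g with hx'def
  set y' : Y := y + (1 / βy) • v with hy'def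
  set R : ℝ := (f x + ⟪v, y'⟫) - (f x' + ⟪A x' - b, y⟫)
      - (βx / 2 * ‖x' - x‖ ^ 2 + βy / 2 * ‖y' - y‖ ^ 2) with hRdef
  clear_value R
  -- the smoothed gap dominates R
  have hle : ((R : ℝ) : EReal) ≤ smoothedGap (fun u => ((f u : ℝ) : EReal)) A b βx βy x y x y := by
    have hcoe : ((R : ℝ) : EReal)
        = Lag (fun u => ((f u : ℝ) : EReal)) A b x y'
          - Lag (fun u => ((f u : ℝ) : EReal)) A b x' y
          - ((βx / 2 * ‖x' - x‖ ^ 2 + βy / 2 * ‖y' - y‖ ^ 2 : ℝ) : EReal) := by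
      simp only [Lag, hRdef, ← EReal.coe_add, ← EReal.coe_sub, hvdef]
    rw [hcoe, smoothedGap]
    exact le_iSup (fun w : X × Y =>
      Lag (fun u => ((f u : ℝ) : EReal)) A b x w.2
        - Lag (fun u => ((f u : ℝ) : EReal)) A b w.1 y
        - ((βx / 2 * ‖w.1 - x‖ ^ 2 + βy / 2 * ‖w.2 - y‖ ^ 2 : ℝ) : EReal)) ((x', y') : X × Y)
  -- lower bound on R
  have hxx' : x - x' = t • g := by simp [hx'def]
  have hnx : ‖x' - x‖ = t * ‖g‖ := by
    rw [show x' - x = -(t • g) by simp [hx'def], norm_neg, norm_smul, Real.norm_eq_abs,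
      abs_of_pos htpos]
  have hny : ‖y' - y‖ = (1 / βy) * ‖v‖ := by
    rw [show y' - y = (1 / βy) • v by simp [hy'def], norm_smul, Real.norm_eq_abs,
      abs_of_pos (by positivity)]
  have h1 : ⟪v, y'⟫ = ⟪v, y⟫ + (1 / βy) * ‖v‖ ^ 2 := by
    rw [hy'def, inner_add_right, real_inner_smul_right, real_inner_self_eq_norm_sq]
  have h2 : ⟪A x' - b, y⟫ = ⟪v, y⟫ - t * ⟪g, At y⟫ := by
    have : A x' - b = v - t • (A g) := by
      rw [hx'def, map_sub, map_smul, hvdef]; abel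
    rw [this, inner_sub_left, real_inner_smul_left, hAt]
  have hgrad := convexOn_grad_le f hf_conv (hf' x') x
  have hsplit : ⟪f' x', x - x'⟫ = ⟪f' x, x - x'⟫ + ⟪f' x' - f' x, x - x'⟫ := by
    rw [inner_sub_left]; ring
  have hcs : |⟪f' x' - f' x, x - x'⟫| ≤ ((L : ℝ) * (t * ‖g‖)) * (t * ‖g‖) := by
    refine le_trans (abs_real_inner_le_norm _ _) ?_
    have hlip : ‖f' x' - f' x‖ ≤ (L : ℝ) * (t * ‖g‖) := by
      have := hLip.dist_le_mul x' x
      rwa [dist_eq_norm, dist_eq_norm, hnx] at this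
    have hnx2 : ‖x - x'‖ = t * ‖g‖ := by rw [← norm_neg, neg_sub, hnx]
    rw [hnx2]
    exact mul_le_mul_of_nonneg_right hlip (by positivity)
  have hinner1 : ⟪f' x, x - x'⟫ = t * ⟪f' x, g⟫ := by rw [hxx', real_inner_smul_right]
  have hgsq : ⟪f' x, g⟫ + ⟪g, At y⟫ = ‖g‖ ^ 2 := by
    have hc' : ⟪g, At y⟫ = ⟪At y, g⟫ := real_inner_comm _ _
    rw [hc', ← inner_add_left, ← hgdef, real_inner_self_eq_norm_sq]
  have habs := abs_le.mp hcs
  have hfx' : f x' ≤ f x - t * ⟪f' x, g⟫ + (L : ℝ) * t ^ 2 * ‖g‖ ^ 2 := by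
    nlinarith [hgrad, hsplit, hinner1, habs.1]
  have e2 : t * ⟪f' x, g⟫ + t * ⟪g, At y⟫ = t * ‖g‖ ^ 2 := by
    rw [← mul_add, hgsq]
  have e3 : (L : ℝ) * t ^ 2 + βx / 2 * t ^ 2 = t / 2 := by
    have h := hteq
    field_simp [htdef] at h ⊢
    nlinarith [h]
  have e3' : ((L : ℝ) * t ^ 2 + βx / 2 * t ^ 2) * ‖g‖ ^ 2 = t / 2 * ‖g‖ ^ 2 := by rw [e3]
  have hRexp : R = f x - f x' + t * ⟪g, At y⟫ + 1 / (2 * βy) * ‖v‖ ^ 2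
      - βx / 2 * t ^ 2 * ‖g‖ ^ 2 := by
    rw [hRdef, h1, h2, hnx, hny]
    field_simp
    ring
  have hRge : t / 2 * ‖g‖ ^ 2 + 1 / (2 * βy) * ‖v‖ ^ 2 ≤ R := by
    rw [hRexp]
    nlinarith [hfx', e2, e3']
  -- constants
  set M : ℝ := max (2 * ((L : ℝ) + βx) ^ 2 / βx) (2 * βy) with hMdef
  have hM2 : 2 * βy ≤ M := le_max_right _ _
  have hMpos : 0 < M := lt_of_lt_of_le (by positivity) hM2
  have hM1 : 2 * (2 * (L : ℝ) + βx) ≤ M := by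
    refine le_trans ?_ (le_max_left _ _)
    rw [le_div_iff₀ hβx]
    nlinarith [sq_nonneg (L : ℝ)]
  set G := smoothedGap (fun u => ((f u : ℝ) : EReal)) A b βx βy x y x y with hGdef
  set a : ℝ := t / 2 * ‖g‖ ^ 2 + 1 / (2 * βy) * ‖v‖ ^ 2 with hadef
  clear_value M G a
  have hG : ((a : ℝ) : EReal) ≤ G := le_trans (EReal.coe_le_coe_iff.mpr hRge) hle
  have hkey : ‖g‖ ^ 2 + ‖v‖ ^ 2 ≤ M * a := by
    have h1' : 2 * (2 * (L : ℝ) + βx) * (t / 2 * ‖g‖ ^ 2) = ‖g‖ ^ 2 := by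
      rw [show 2 * (2 * (L : ℝ) + βx) * (t / 2 * ‖g‖ ^ 2)
        = ((2 * (L : ℝ) + βx) * t) * ‖g‖ ^ 2 from by ring, hteq, one_mul]
    have h2' : 2 * βy * (1 / (2 * βy) * ‖v‖ ^ 2) = ‖v‖ ^ 2 := by
      field_simp
    have hx1 : (0:ℝ) ≤ t / 2 * ‖g‖ ^ 2 := mul_nonneg (by linarith) (sq_nonneg _)
    have hx2 : (0:ℝ) ≤ 1 / (2 * βy) * ‖v‖ ^ 2 := mul_nonneg (by positivity) (sq_nonneg _)
    have k1 := mul_le_mul_of_nonneg_right hM1 hx1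
    have k2 := mul_le_mul_of_nonneg_right hM2 hx2
    rw [hadef, mul_add]
    linarith [k1, k2]

  by_cases hTop : G = ⊤
  · rw [hTop, EReal.mul_top_of_pos (by exact_mod_cast EReal.coe_pos.mpr hMpos)]
    exact le_top
  · have hbot : G ≠ ⊥ := (lt_of_lt_of_le (EReal.bot_lt_coe a) hG).ne'
    have hGeq : ((G.toReal : ℝ) : EReal) = G := EReal.coe_toReal hTop hbot
    have haG : a ≤ G.toReal := by
      rw [← EReal.coe_le_coe_iff, hGeq]; exact hG
    rw [← hGeq, ← EReal.coe_mul, EReal.coe_le_coe_iff]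
    calc ‖g‖ ^ 2 + ‖v‖ ^ 2 ≤ M * a := hkey
      _ ≤ M * G.toReal := mul_le_mul_of_nonneg_left haG hMpos.le
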